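/- With the vectors r⁰, r⁸, r¹⁸ defined from the appendix S-matrix of V_{L₂}^{S₄}, one has (1/32)·Σ_{s=0}^{27} r¹⁸(s)·r¹⁸(s)·r⁸(s) / r⁰(s) = 1. (This is the Verlinde-formula computation of the fusion coefficient N_{18,18}^{8} = 1, i.e. the fusion product M¹⁸ ⊠ M¹⁸ contains M⁸ = (V_{ℤβ+β/8})⁺ with multiplicity one, as asserted in Theorem 7.3.) -/

import Mathlib

noncomputable section

/-- `W_j = (4/3)(e^{jπi/9} + e^{−jπi/9})`. -/
def Wj (j : ℕ) : ℂ :=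
  (4 / 3) * (Complex.exp ((j : ℂ) * Real.pi * Complex.I / 9) +
    Complex.exp (-((j : ℂ) * Real.pi * Complex.I / 9)))

/-- `T_j = e^{jπi/8} + e^{−jπi/8}`. -/
def Tj (j : ℕ) : ℂ :=
  Complex.exp ((j : ℂ) * Real.pi * Complex.I / 8) +
    Complex.exp (-((j : ℂ) * Real.pi * Complex.I / 8))

/-- `P_j = e^{jπi/16} + e^{−jπi/16}`. -/
def Pj (j : ℕ) : ℂ :=
  Complex.exp ((j : ℂ) * Real.pi * Complex.I / 16) +
    Complex.exp (-((j : ℂ) * Real.pi * Complex.I / 16))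

/-- `√32` times the row of the S-matrix of `V_{L₂}^{S₄}` indexed by `M⁰ = V_{L₂}^{S₄}`. -/
def r0 : Fin 28 → ℂ :=
  ![1/6, 1/6, 1/3, 1/2, 1/2, 1/3, 1/3, 2/3, 1, 1, 1, 1,
    4/3, 4/3, 4/3, 4/3, 4/3, 4/3, 1, 1, 1, 1, 1, 1, 1, 1, 2, 2]

/-- `√32` times the row of the S-matrix of `V_{L₂}^{S₄}` indexed by `M⁸`. -/
def r8 : Fin 28 → ℂ :=
  ![1, 1, 2, -1, -1, 0, 0, 0,
    (Real.sqrt 2 : ℂ), (Real.sqrt 2 : ℂ), -(Real.sqrt 2 : ℂ), -(Real.sqrt 2 : ℂ),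
    0, 0, 0, 0, 0, 0, Tj 1, Tj 3, Tj 5, Tj 7, Tj 7, Tj 5, Tj 3, Tj 1, 0, 0]

/-- `√32` times the row of the S-matrix of `V_{L₂}^{S₄}` indexed by `M¹²`. -/
def r12 : Fin 28 → ℂ :=
  ![4/3, 4/3, -4/3, 0, 0, 4/3, 4/3, -4/3, 0, 0, 0, 0,
    Wj 1, Wj 2, Wj 4, Wj 5, Wj 7, Wj 8, 0, 0, 0, 0, 0, 0, 0, 0, 0, 0]

/-- `√32` times the row of the S-matrix of `V_{L₂}^{S₄}` indexed by `M¹³`. -/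
def r13 : Fin 28 → ℂ :=
  ![4/3, 4/3, -4/3, 0, 0, -4/3, -4/3, 4/3, 0, 0, 0, 0,
    Wj 2, Wj 4, Wj 8, Wj 8, Wj 4, Wj 2, 0, 0, 0, 0, 0, 0, 0, 0, 0, 0]

/-- `√32` times the row of the S-matrix of `V_{L₂}^{S₄}` indexed by `M¹⁸`. -/
def r18 : Fin 28 → ℂ :=
  ![1, -1, 0, 1, -1, (Real.sqrt 2 : ℂ), -(Real.sqrt 2 : ℂ), 0,
    Tj 1, Tj 7, Tj 3, Tj 5, 0, 0, 0, 0, 0, 0,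
    Pj 1, Pj 3, Pj 5, Pj 7, Pj 9, Pj 11, Pj 13, Pj 15, 0, 0]

/-- `√32` times the row of the S-matrix of `V_{L₂}^{S₄}` indexed by `M¹⁹`. -/
def r19 : Fin 28 → ℂ :=
  ![1, -1, 0, 1, -1, -(Real.sqrt 2 : ℂ), (Real.sqrt 2 : ℂ), 0,
    Tj 3, Tj 5, Tj 7, Tj 1, 0, 0, 0, 0, 0, 0,
    Pj 3, Pj 9, Pj 15, Pj 11, Pj 5, Pj 1, Pj 7, Pj 13, 0, 0]

end

/-- Verlinde-formula computation of the fusion coefficient `N_{18,18}^{8} = 1`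
for `V_{L₂}^{S₄}`: the fusion product `M¹⁸ ⊠ M¹⁸` contains `M⁸ = (V_{ℤβ+β/8})⁺`
with multiplicity one (Theorem 7.3). -/
theorem fusion_coefficient_18_18_8 :
    (1 / 32 : ℂ) * ∑ s : Fin 28, r18 s * r18 s * r8 s / r0 s = 1 := by
  set a : ℂ := Complex.exp (Real.pi * Complex.I / 16) with ha
  have hpow : ∀ j : ℕ, Complex.exp ((j : ℂ) * Real.pi * Complex.I / 16) = a ^ j := by
    intro j
    rw [ha, ← Complex.exp_nat_mul]
    ring_nf
  have ha16 : a ^ 16 = -1 := by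
    rw [ha, ← Complex.exp_nat_mul]
    rw [show ((16 : ℕ) : ℂ) * (Real.pi * Complex.I / 16) = Real.pi * Complex.I by
      push_cast; ring, Complex.exp_pi_mul_I]
  have hainv : a⁻¹ = -a ^ 15 := by
    refine inv_eq_of_mul_eq_one_right ?_
    linear_combination -ha16
  have hTj : ∀ j : ℕ, Tj j = a ^ (2 * j) + (a⁻¹) ^ (2 * j) := by
    intro j
    have h := hpow (2 * j)
    push_cast at h
    rw [show (2 : ℂ) * (j : ℂ) * Real.pi * Complex.I / 16
        = (j : ℂ) * Real.pi * Complex.I / 8 by ring] at h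
    rw [Tj, h, Complex.exp_neg, h, inv_pow]
  have hPj : ∀ j : ℕ, Pj j = a ^ j + (a⁻¹) ^ j := by
    intro j
    rw [Pj, hpow j, Complex.exp_neg, hpow j, inv_pow]
  have t1 : Tj 1 = a ^ 2 + a ^ 30 := by rw [hTj, hainv]; ring
  have t3 : Tj 3 = a ^ 6 + a ^ 90 := by rw [hTj, hainv]; ring
  have t5 : Tj 5 = a ^ 10 + a ^ 150 := by rw [hTj, hainv]; ring
  have t7 : Tj 7 = a ^ 14 + a ^ 210 := by rw [hTj, hainv]; ring
  have p1 : Pj 1 = a - a ^ 15 := by rw [hPj, hainv]; ring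
  have p3 : Pj 3 = a ^ 3 - a ^ 45 := by rw [hPj, hainv]; ring
  have p5 : Pj 5 = a ^ 5 - a ^ 75 := by rw [hPj, hainv]; ring
  have p7 : Pj 7 = a ^ 7 - a ^ 105 := by rw [hPj, hainv]; ring
  have p9 : Pj 9 = a ^ 9 - a ^ 135 := by rw [hPj, hainv]; ring
  have p11 : Pj 11 = a ^ 11 - a ^ 165 := by rw [hPj, hainv]; ring
  have p13 : Pj 13 = a ^ 13 - a ^ 195 := by rw [hPj, hainv]; ring
  have p15 : Pj 15 = a ^ 15 - a ^ 225 := by rw [hPj, hainv]; ring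
  have hs : (Real.sqrt 2 : ℂ) = a ^ 4 + a ^ 60 := by
    have h := hpow 4
    push_cast at h
    rw [show (4 : ℂ) * Real.pi * Complex.I / 16
        = Real.pi * Complex.I / 4 by ring] at h
    have hc := Complex.ofReal_cos (Real.pi / 4)
    rw [Real.cos_pi_div_four, Complex.cos] at hc
    have harg : ((Real.pi / 4 : ℝ) : ℂ) * Complex.I = Real.pi * Complex.I / 4 := by
      push_cast; ring
    rw [show -((Real.pi / 4 : ℝ) : ℂ) * Complex.I = -(((Real.pi / 4 : ℝ) : ℂ) * Complex.I) by ring,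
      harg, h, Complex.exp_neg, h] at hc
    have h2 : (Real.sqrt 2 : ℂ) = a ^ 4 + (a ^ 4)⁻¹ := by
      push_cast at hc
      field_simp at hc
      have hmul : a * a⁻¹ = 1 := mul_inv_cancel₀ (by rw [ha]; exact Complex.exp_ne_zero _)
      linear_combination hc + a ^ 4 * ((a * a⁻¹) ^ 3 + (a * a⁻¹) ^ 2 + a * a⁻¹ + 1) * hmul
    rw [h2, ← inv_pow, hainv]; ring
  simp only [Fin.sum_univ_succ, Fin.sum_univ_zero, r18, r8, r0,
    Matrix.cons_val_zero, Matrix.cons_val_succ, Fin.succ_zero_eq_one]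
  rw [t1, t3, t5, t7, p1, p3, p5, p7, p9, p11, p13, p15, hs]
  linear_combination ((-3/4 : ℂ) + (1/32 : ℂ) * a ^ 4 + (1/32 : ℂ) * a ^ 8 + (1/32 : ℂ) * a ^ 12 + (23/32 : ℂ) * a ^ 16 + (-1/16 : ℂ) * a ^ 18 + (-1/16 : ℂ) * a ^ 24 + (-1/2 : ℂ) * a ^ 32 + (1/16 : ℂ) * a ^ 34 + (1/16 : ℂ) * a ^ 36 + (1/16 : ℂ) * a ^ 40 + (-1/16 : ℂ) * a ^ 46 + (1/2 : ℂ) * a ^ 48 + (-1/16 : ℂ) * a ^ 50 + (-1/16 : ℂ) * a ^ 52 + (-1/16 : ℂ) * a ^ 54 + (-1/16 : ℂ) * a ^ 56 + (1/16 : ℂ) * a ^ 60 + (1/16 : ℂ) * a ^ 62 + (-7/16 : ℂ) * a ^ 64 + (1/16 : ℂ) * a ^ 66 + (1/16 : ℂ) * a ^ 68 + (1/16 : ℂ) * a ^ 70 + (1/32 : ℂ) * a ^ 72 + (-1/16 : ℂ) * a ^ 76 + (-1/16 : ℂ) * a ^ 78 + (13/32 : ℂ) * a ^ 80 + (-1/16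 : ℂ) * a ^ 82 + (-1/16 : ℂ) * a ^ 84 + (-1/16 : ℂ) * a ^ 86 + (-1/16 : ℂ) * a ^ 90 + (1/8 : ℂ) * a ^ 92 + (1/16 : ℂ) * a ^ 94 + (-11/32 : ℂ) * a ^ 96 + (1/16 : ℂ) * a ^ 98 + (1/16 : ℂ) * a ^ 102 + (1/16 : ℂ) * a ^ 106 + (-1/8 : ℂ) * a ^ 108 + (-1/16 : ℂ) * a ^ 110 + (11/32 : ℂ) * a ^ 112 + (-1/16 : ℂ) * a ^ 114 + (1/32 : ℂ) * a ^ 116 + (-1/16 : ℂ) * a ^ 118 + (1/32 : ℂ) * a ^ 120 + (-1/16 : ℂ) * a ^ 122 + (1/8 : ℂ) * a ^ 124 + (-11/32 : ℂ) * a ^ 128 + (1/16 : ℂ) * a ^ 130 + (-1/32 : ℂ) * a ^ 132 + (1/16 : ℂ) * a ^ 134 + (-1/32 : ℂ) * a ^ 136 + (-1/8 : ℂ) * a ^ 140 + (11/32 : ℂ) * a ^ 144 + (-1/16 : ℂ) * a ^ 146 + (1/32 : ℂ) * a ^ 148 + (-1/16 : ℂ) * a ^ 150 + (1/32 : ℂ)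 * a ^ 152 + (1/16 : ℂ) * a ^ 156 + (-1/16 : ℂ) * a ^ 158 + (-9/32 : ℂ) * a ^ 160 + (1/16 : ℂ) * a ^ 162 + (-3/32 : ℂ) * a ^ 164 + (1/16 : ℂ) * a ^ 166 + (-1/32 : ℂ) * a ^ 168 + (-1/32 : ℂ) * a ^ 172 + (1/16 : ℂ) * a ^ 174 + (9/32 : ℂ) * a ^ 176 + (-1/16 : ℂ) * a ^ 178 + (1/8 : ℂ) * a ^ 180 + (-1/16 : ℂ) * a ^ 182 + (-1/16 : ℂ) * a ^ 186 + (1/32 : ℂ) * a ^ 188 + (-1/16 : ℂ) * a ^ 190 + (-9/32 : ℂ) * a ^ 192 + (1/16 : ℂ) * a ^ 194 + (-1/8 : ℂ) * a ^ 196 + (1/16 : ℂ) * a ^ 198 + (1/16 : ℂ) * a ^ 202 + (-1/32 : ℂ) * a ^ 204 + (1/16 : ℂ) * a ^ 206 + (9/32 : ℂ) * a ^ 208 + (-1/16 : ℂ) * a ^ 210 + (1/8 : ℂ) * a ^ 212 + (-1/8 : ℂ) * a ^ 214 + (-1/16 : ℂ) * a ^ 218 + (-1/32 : ℂ) * a ^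 220 + (-1/16 : ℂ) * a ^ 222 + (-7/32 : ℂ) * a ^ 224 + (1/16 : ℂ) * a ^ 226 + (-1/32 : ℂ) * a ^ 228 + (1/16 : ℂ) * a ^ 230 + (1/16 : ℂ) * a ^ 234 + (1/32 : ℂ) * a ^ 236 + (1/16 : ℂ) * a ^ 238 + (3/16 : ℂ) * a ^ 240 + (-1/8 : ℂ) * a ^ 242 + (1/32 : ℂ) * a ^ 244 + (-1/16 : ℂ) * a ^ 246 + (-1/16 : ℂ) * a ^ 250 + (-1/32 : ℂ) * a ^ 252 + (-1/16 : ℂ) * a ^ 254 + (-3/16 : ℂ) * a ^ 256 + (1/8 : ℂ) * a ^ 258 + (-1/32 : ℂ) * a ^ 260 + (1/16 : ℂ) * a ^ 262 + (1/16 : ℂ) * a ^ 266 + (1/32 : ℂ) * a ^ 268 + (3/16 : ℂ) * a ^ 272 + (-1/8 : ℂ) * a ^ 274 + (1/32 : ℂ) * a ^ 276 + (-1/16 : ℂ) * a ^ 278 + (-1/16 : ℂ) * a ^ 282 + (1/16 : ℂ) * a ^ 284 + (-3/16 : ℂ) * a ^ 288 + (1/8 : ℂ) * a ^ 290 + (-1/32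 : ℂ) * a ^ 292 + (1/16 : ℂ) * a ^ 294 + (-1/32 : ℂ) * a ^ 300 + (5/32 : ℂ) * a ^ 304 + (-1/8 : ℂ) * a ^ 306 + (1/32 : ℂ) * a ^ 308 + (-1/16 : ℂ) * a ^ 310 + (1/32 : ℂ) * a ^ 316 + (-5/32 : ℂ) * a ^ 320 + (1/16 : ℂ) * a ^ 322 + (-1/32 : ℂ) * a ^ 324 + (-1/32 : ℂ) * a ^ 332 + (5/32 : ℂ) * a ^ 336 + (-1/16 : ℂ) * a ^ 338 + (1/16 : ℂ) * a ^ 340 + (1/32 : ℂ) * a ^ 348 + (-5/32 : ℂ) * a ^ 352 + (-1/16 : ℂ) * a ^ 356 + (-1/32 : ℂ) * a ^ 360 + (-1/32 : ℂ) * a ^ 364 + (5/32 : ℂ) * a ^ 368 + (1/16 : ℂ) * a ^ 372 + (1/32 : ℂ) * a ^ 376 + (1/32 : ℂ) * a ^ 380 + (-5/32 : ℂ) * a ^ 384 + (-1/16 : ℂ) * a ^ 388 + (-1/32 : ℂ) * a ^ 392 + (5/32 : ℂ) * a ^ 400 + (1/16 : ℂ) * a ^ 404 + (1/32 : ℂ)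 * a ^ 408 + (-5/32 : ℂ) * a ^ 416 + (-1/32 : ℂ) * a ^ 420 + (5/32 : ℂ) * a ^ 432 + (1/32 : ℂ) * a ^ 436 + (-5/32 : ℂ) * a ^ 448 + (5/32 : ℂ) * a ^ 464) * ha16
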